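/- (Corollary 1, conditional form.) Let (Ω, 𝓕, P) be a probability space, let 0 < α ≤ α' ≤ 1, q ∈ ℝ, ε ∈ (0, 1−q), δ ∈ (0,1), and let n satisfy n > (1/2)·ln(2/(1−√(1−δ)))·(1/ε)²·((2−α')/α')². Let F₀, F_a : ℝ → ℝ be the true nominal and alien score CDFs, set Fₘ(x) = (1−α)·F₀(x) + α·F_a(x), and assume admissibility: F₀(x) ≥ Fₘ(x) for all x ∈ ℝ. Define F'_a(x) = (Fₘ(x) − (1−α')·F₀(x)) / α'. Let F̂₀, F̂ₘ : Ω × ℝ → ℝ be measurable random functions such that the events A = {ω : ∃x, |F̂ₘ(ω,x) − Fₘ(x)| > α'·ε/(2−α')} and B = {ω : ∃x, |F̂₀(ω,x) − F₀(x)| > α'·ε/(2−α')} are measurable, independent, and each has probability at most 2·exp(−2·n·(α'·ε/(2−α'))²). Then with probability at least 1 − δ over ω, every threshold τ ∈ ℝ satisfying (F̂ₘ(ω,τ) − (1−α')·F̂₀(ω,τ))/α' ≤ q also satisfies F_a(τ) ≤ q + ε; that is, running Algorithm 1 with the upper bound α' in place of α still achieves an alien detection rate of at least 1 − q − ε. 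-/

import Mathlib

open MeasureTheory

set_option maxHeartbeats 1000000

/-- Corollary 1 (conditional form).  Running Algorithm 1 with an upper bound
`α' ≥ α` on the alien fraction, under admissibility and the sample-size
condition computed with `α'`, still yields with probability at least `1 − δ`
that every returned threshold `τ` satisfies `F_a(τ) ≤ q + ε`. -/
theorem corollary1_conditional (Ω : Type*) [MeasurableSpace Ω]
    (P : Measure Ω) [IsProbabilityMeasure P]
    (α α' : ℝ) (hα : 0 < α) (hαα' : α ≤ α') (hα' : α' ≤ 1)
    (q ε : ℝ) (hε : ε ∈ Set.Ioo (0 : ℝ) (1 - q))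
    (δ : ℝ) (hδ : δ ∈ Set.Ioo (0 : ℝ) 1)
    (n : ℝ)
    (hn : n > (1 / 2) * Real.log (2 / (1 - Real.sqrt (1 - δ))) * (1 / ε) ^ 2
            * ((2 - α') / α') ^ 2)
    (F₀ Fa : ℝ → ℝ)
    (Fₘ : ℝ → ℝ) (hFₘ : ∀ x, Fₘ x = (1 - α) * F₀ x + α * Fa x)
    (hadm : ∀ x, F₀ x ≥ Fₘ x)
    (Fhat₀ Fhatₘ : Ω → ℝ → ℝ)
    (A B : Set Ω)
    (hAdef : A = {ω | ∃ x, |Fhatₘ ω x - Fₘ x| > α' * ε / (2 - α')})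
    (hBdef : B = {ω | ∃ x, |Fhat₀ ω x - F₀ x| > α' * ε / (2 - α')})
    (hAmeas : MeasurableSet A) (hBmeas : MeasurableSet B)
    (hindep : P (A ∩ B) = P A * P B)
    (hPA : (P A).toReal ≤ 2 * Real.exp (-2 * n * (α' * ε / (2 - α')) ^ 2))
    (hPB : (P B).toReal ≤ 2 * Real.exp (-2 * n * (α' * ε / (2 - α')) ^ 2)) :
    1 - δ ≤
      (P {ω | ∀ τ : ℝ, (Fhatₘ ω τ - (1 - α') * Fhat₀ ω τ) / α' ≤ q →
          Fa τ ≤ q + ε}).toReal := by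
  obtain ⟨hε0, hεq⟩ := hε
  obtain ⟨hδ0, hδ1⟩ := hδ
  have hα'0 : 0 < α' := lt_of_lt_of_le hα hαα'
  have h2α' : 0 < 2 - α' := by linarith
  set lam : ℝ := α' * ε / (2 - α') with hlam
  have hlam0 : 0 < lam := div_pos (mul_pos hα'0 hε0) h2α'
  have hs0 : (0:ℝ) ≤ 1 - δ := by linarith
  have hs1 : Real.sqrt (1 - δ) < 1 := by
    have : Real.sqrt (1 - δ) < Real.sqrt 1 := Real.sqrt_lt_sqrt hs0 (by linarith)
    simpa using this
  have hs' : 0 ≤ Real.sqrt (1 - δ) := Real.sqrt_nonneg _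
  have hden : 0 < 1 - Real.sqrt (1 - δ) := by linarith
  set L : ℝ := Real.log (2 / (1 - Real.sqrt (1 - δ))) with hL
  -- sample size gives bound on exponential
  have hεne : ε ≠ 0 := ne_of_gt hε0
  have hα'ne : α' ≠ 0 := ne_of_gt hα'0
  have h2ne : (2 - α') ≠ 0 := ne_of_gt h2α'
  have hprodeq : (1 / 2) * L * (1 / ε) ^ 2 * ((2 - α') / α') ^ 2 * lam ^ 2
      = (1 / 2) * L := by
    rw [hlam]; field_simp
  have h1 : L ≤ 2 * n * lam ^ 2 := by
    have h := mul_lt_mul_of_pos_right hn (pow_pos hlam0 2)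
    nlinarith [h, hprodeq]
  have hexp : Real.exp (-2 * n * lam ^ 2) ≤ (1 - Real.sqrt (1 - δ)) / 2 := by
    have hpos : (0:ℝ) < (1 - Real.sqrt (1 - δ)) / 2 := by linarith
    rw [← Real.exp_log hpos]
    apply Real.exp_le_exp.mpr
    have hlog1 : L = Real.log 2 - Real.log (1 - Real.sqrt (1 - δ)) := by
      rw [hL, Real.log_div two_ne_zero hden.ne']
    have hlog2 : Real.log ((1 - Real.sqrt (1 - δ)) / 2)
        = Real.log (1 - Real.sqrt (1 - δ)) - Real.log 2 :=
      Real.log_div hden.ne' two_ne_zero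
    linarith
  have hpaB : (P A).toReal ≤ 1 - Real.sqrt (1 - δ) := by
    calc (P A).toReal ≤ 2 * Real.exp (-2 * n * lam ^ 2) := hPA
    _ ≤ 1 - Real.sqrt (1 - δ) := by linarith
  have hpbB : (P B).toReal ≤ 1 - Real.sqrt (1 - δ) := by
    calc (P B).toReal ≤ 2 * Real.exp (-2 * n * lam ^ 2) := hPB
    _ ≤ 1 - Real.sqrt (1 - δ) := by linarith
  -- deterministic inclusion
  have hsub : Aᶜ ∩ Bᶜ ⊆ {ω | ∀ τ : ℝ,
      (Fhatₘ ω τ - (1 - α') * Fhat₀ ω τ) / α' ≤ q → Fa τ ≤ q + ε} := by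
    rintro ω ⟨hA, hB⟩ τ hτ
    have hAω : ∀ x, |Fhatₘ ω x - Fₘ x| ≤ lam := by
      intro x
      by_contra hc
      exact hA (by rw [hAdef]; exact ⟨x, by push_neg at hc; exact hc⟩)
    have hBω : ∀ x, |Fhat₀ ω x - F₀ x| ≤ lam := by
      intro x
      by_contra hc
      exact hB (by rw [hBdef]; exact ⟨x, by push_neg at hc; exact hc⟩)
    have hm := abs_le.mp (hAω τ)
    have h0 := abs_le.mp (hBω τ)
    have hadmτ := hadm τ
    rw [hFₘ τ] at hadmτ
    have hFa0 : Fa τ ≤ F₀ τ := by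
      have hmul : α * Fa τ ≤ α * F₀ τ := by linarith
      exact le_of_mul_le_mul_left hmul hα
    have hq' : Fhatₘ ω τ - (1 - α') * Fhat₀ ω τ ≤ α' * q := by
      rw [div_le_iff₀ hα'0] at hτ; linarith
    have hlameq : (2 - α') * lam = α' * ε := by
      rw [hlam]; field_simp
    have k1 : 0 ≤ (α' - α) * (F₀ τ - Fa τ) :=
      mul_nonneg (by linarith) (by linarith)
    have k2 : 0 ≤ (1 - α') * (F₀ τ - (Fhat₀ ω τ - lam)) :=
      mul_nonneg (by linarith) (by linarith)
    have hFm := hFₘ τ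
    have hfin : α' * Fa τ ≤ α' * (q + ε) := by
      linarith [k1, k2, hq', hlameq, hm.1, hm.2, h0.1, h0.2, hFm]
    exact le_of_mul_le_mul_left hfin hα'0
  -- probability computation
  have hUmeas : MeasurableSet (A ∪ B) := hAmeas.union hBmeas
  have hfinU : P (A ∪ B) ≠ ⊤ := measure_ne_top _ _
  have hfinA : P A ≠ ⊤ := measure_ne_top _ _
  have hfinB : P B ≠ ⊤ := measure_ne_top _ _
  have hfinAB : P (A ∩ B) ≠ ⊤ := measure_ne_top _ _
  have hincl : P (A ∪ B) + P (A ∩ B) = P A + P B :=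
    measure_union_add_inter A hBmeas
  have hinclR : (P (A ∪ B)).toReal + (P A * P B).toReal
      = (P A).toReal + (P B).toReal := by
    rw [← hindep, ← ENNReal.toReal_add hfinU hfinAB,
        ← ENNReal.toReal_add hfinA hfinB, hincl]
  have hmulR : (P A * P B).toReal = (P A).toReal * (P B).toReal :=
    ENNReal.toReal_mul
  have hcompl : (P ((A ∪ B)ᶜ)).toReal = 1 - (P (A ∪ B)).toReal := by
    rw [measure_compl hUmeas hfinU, measure_univ,
        ENNReal.toReal_sub_of_le prob_le_one ENNReal.one_ne_top, ENNReal.toReal_one]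
  have hmono : (P ((A ∪ B)ᶜ)).toReal
      ≤ (P {ω | ∀ τ : ℝ, (Fhatₘ ω τ - (1 - α') * Fhat₀ ω τ) / α' ≤ q
          → Fa τ ≤ q + ε}).toReal := by
    apply ENNReal.toReal_mono (measure_ne_top _ _)
    apply measure_mono
    rw [Set.compl_union]
    exact hsub
  have hpa0 : 0 ≤ (P A).toReal := ENNReal.toReal_nonneg
  have hpb0 : 0 ≤ (P B).toReal := ENNReal.toReal_nonneg
  have hprodlb : 1 - δ ≤ (1 - (P A).toReal) * (1 - (P B).toReal) := by
    have hsq : Real.sqrt (1 - δ) * Real.sqrt (1 - δ) = 1 - δ :=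
      Real.mul_self_sqrt hs0
    nlinarith [hsq, hpaB, hpbB, hs']
  calc 1 - δ ≤ (1 - (P A).toReal) * (1 - (P B).toReal) := hprodlb
    _ = 1 - (P (A ∪ B)).toReal := by nlinarith [hinclR, hmulR]
    _ = (P ((A ∪ B)ᶜ)).toReal := hcompl.symm
    _ ≤ _ := hmono
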